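/- Let η be a continuous function of τ, let N ≥ 1, and let T⁰, …, T^N be C¹ functions of τ satisfying (T^k)'(τ) + (2k+2)(η(τ) − 2k − 1) T^{k+1}(τ) = 0 for k = 0, …, N−1 and (T^N)'(τ) = 0. Then f(τ, z) = Σ_{k=0}^{N} T^k(τ) z^{2k} is a solution of f_τ + η(τ) z^{-1} f_z − f_zz = 0 for z ≠ 0. -/

import Mathlib

theorem polynomial_solutions (η : ℝ → ℝ) (hη : Continuous η) (N : ℕ) (hN : 1 ≤ N)
    (T : ℕ → ℝ → ℝ) (hT : ∀ k ≤ N, ContDiff ℝ 1 (T k))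
    (hrec : ∀ k < N, ∀ τ : ℝ,
      deriv (T k) τ + (2 * (k : ℝ) + 2) * (η τ - 2 * (k : ℝ) - 1) * T (k + 1) τ = 0)
    (hTN : ∀ τ : ℝ, deriv (T N) τ = 0)
    (f : ℝ → ℝ → ℝ)
    (hf : ∀ τ z, f τ z = ∑ k ∈ Finset.range (N + 1), T k τ * z ^ (2 * k)) :
    ∀ τ z : ℝ, z ≠ 0 →
      deriv (fun s => f s z) τ + η τ * z⁻¹ * deriv (f τ) z
        - deriv (deriv (f τ)) z = 0 := by
  intro τ z hz
  have h1 : deriv (fun s => f s z) τ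
      = ∑ k ∈ Finset.range (N + 1), deriv (T k) τ * z ^ (2 * k) := by
    have he : (fun s => f s z)
        = fun s => ∑ k ∈ Finset.range (N + 1), T k s * z ^ (2 * k) := by
      funext s; exact hf s z
    rw [he]
    exact (HasDerivAt.fun_sum (fun k hk =>
      (((hT k (Nat.lt_succ_iff.mp (Finset.mem_range.mp hk))).differentiable
        one_ne_zero τ).hasDerivAt).mul_const (z ^ (2 * k)))).deriv
  have h2 : deriv (f τ)
      = fun y => ∑ k ∈ Finset.range (N + 1),
          T k τ * ((2 * k : ℕ) * y ^ (2 * k - 1)) := by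
    funext y
    have he : f τ = fun y => ∑ k ∈ Finset.range (N + 1), T k τ * y ^ (2 * k) :=
      funext (hf τ)
    rw [he]
    exact (HasDerivAt.fun_sum (fun k _ =>
      (hasDerivAt_pow (2 * k) y).const_mul (T k τ))).deriv
  have h3 : deriv (deriv (f τ)) z
      = ∑ k ∈ Finset.range (N + 1),
          T k τ * (((2 * k : ℕ) : ℝ) * (((2 * k - 1 : ℕ) : ℝ) * z ^ (2 * k - 1 - 1))) := by
    rw [h2]
    exact (HasDerivAt.fun_sum (fun k _ =>
      (((hasDerivAt_pow (2 * k - 1) z).const_mul ((2 * k : ℕ) : ℝ)).const_mul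
        (T k τ)))).deriv
  rw [h3, h1, h2]
  simp only []
  beta_reduce
  rw [Finset.mul_sum, add_sub_assoc, ← Finset.sum_sub_distrib]
  rw [Finset.sum_range_succ, hTN τ, Finset.sum_range_succ']
  simp only [Nat.mul_zero, Nat.cast_zero, zero_mul, mul_zero, zero_pow, sub_zero,
    zero_add, add_zero]
  rw [← Finset.sum_add_distrib]
  apply Finset.sum_eq_zero
  intro k hk
  have hkN : k < N := Finset.mem_range.mp hk
  have hder : deriv (T k) τ
      = -((2 * (k : ℝ) + 2) * (η τ - 2 * (k : ℝ) - 1) * T (k + 1) τ) := by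
    have := hrec k hkN τ; linarith
  have e1 : 2 * (k + 1) - 1 = 2 * k + 1 := by omega
  have e2 : 2 * k + 1 - 1 = 2 * k := by omega
  rw [hder, e1, e2]
  push_cast
  rw [pow_succ]
  field_simp
  ring
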